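/- Let t11 ≤ min(t12,t21) ≤ max(t12,t21) ≤ t22 be nonnegative reals, c(t) = h(t−t11) − h(t−t12) − h(t−t21) + h(t−t22), and define the cumulative contrast C(0,t) = ∫_0^t c(τ) dτ. Then C(0,t) ≥ 0 for all t ≥ 0 if and only if −t11 + t12 + t21 − t22 ≥ 0. -/

import Mathlib

noncomputable def heaviside (x : ℝ) : ℝ := if 0 ≤ x then 1 else 0

lemma heavi_ind (a : ℝ) :
    (fun τ => heaviside (τ - a)) = Set.indicator (Set.Ici a) (fun _ => (1:ℝ)) := by
  funext τ
  simp only [heaviside, Set.indicator, Set.mem_Ici, sub_nonneg]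

lemma heavi_intble (a t : ℝ) :
    IntervalIntegrable (fun τ => heaviside (τ - a)) MeasureTheory.volume 0 t := by
  rw [heavi_ind, intervalIntegrable_iff]
  exact ((MeasureTheory.integrableOn_const_iff).mpr
    (Or.inr measure_Ioc_lt_top)).indicator measurableSet_Ici

lemma heavi_integral (a t : ℝ) (ha : 0 ≤ a) (ht : 0 ≤ t) :
    ∫ τ in (0:ℝ)..t, heaviside (τ - a) = max (t - a) 0 := by
  rw [intervalIntegral.integral_of_le ht, heavi_ind,
    MeasureTheory.integral_indicator measurableSet_Ici,
    MeasureTheory.setIntegral_const, smul_eq_mul, mul_one, MeasureTheory.Measure.real,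
    MeasureTheory.Measure.restrict_apply measurableSet_Ici]
  rcases le_total t a with h | h
  · have hsub : Set.Ici a ∩ Set.Ioc 0 t ⊆ Set.Icc a t := fun x hx => ⟨hx.1, hx.2.2⟩
    have hle := MeasureTheory.measure_mono (μ := MeasureTheory.volume) hsub
    rw [Real.volume_Icc] at hle
    have h0 : MeasureTheory.volume (Set.Ici a ∩ Set.Ioc 0 t) = 0 := by
      refine le_antisymm (hle.trans ?_) zero_le
      simp [ENNReal.ofReal_eq_zero]; linarith
    rw [h0]
    simp [max_eq_right (by linarith : t - a ≤ 0)]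
  · have hsub1 : Set.Ioc a t ⊆ Set.Ici a ∩ Set.Ioc 0 t :=
      fun x hx => ⟨le_of_lt hx.1, lt_of_le_of_lt ha hx.1, hx.2⟩
    have hsub2 : Set.Ici a ∩ Set.Ioc 0 t ⊆ Set.Icc a t := fun x hx => ⟨hx.1, hx.2.2⟩
    have h1 := MeasureTheory.measure_mono (μ := MeasureTheory.volume) hsub1
    have h2 := MeasureTheory.measure_mono (μ := MeasureTheory.volume) hsub2
    rw [Real.volume_Ioc] at h1
    rw [Real.volume_Icc] at h2
    have heq : MeasureTheory.volume (Set.Ici a ∩ Set.Ioc 0 t) = ENNReal.ofReal (t - a) :=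
      le_antisymm h2 h1
    rw [heq, ENNReal.toReal_ofReal (by linarith : (0:ℝ) ≤ t - a)]
    exact (max_eq_left (by linarith)).symm

theorem stmt3 (t11 t12 t21 t22 : ℝ)
    (h0 : 0 ≤ t11) (h1 : t11 ≤ min t12 t21) (h2 : max t12 t21 ≤ t22)
    (c : ℝ → ℝ)
    (hc : ∀ t, c t = heaviside (t - t11) - heaviside (t - t12)
        - heaviside (t - t21) + heaviside (t - t22)) :
    (∀ t, 0 ≤ t → 0 ≤ ∫ τ in (0:ℝ)..t, c τ) ↔ 0 ≤ -t11 + t12 + t21 - t22 := by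
  have ha1 : t11 ≤ t12 := le_trans h1 (min_le_left _ _)
  have ha2 : t11 ≤ t21 := le_trans h1 (min_le_right _ _)
  have hb1 : t12 ≤ t22 := le_trans (le_max_left _ _) h2
  have hb2 : t21 ≤ t22 := le_trans (le_max_right _ _) h2
  have h12 : (0:ℝ) ≤ t12 := le_trans h0 ha1
  have h21 : (0:ℝ) ≤ t21 := le_trans h0 ha2
  have h22 : (0:ℝ) ≤ t22 := le_trans h12 hb1
  have hC : ∀ t, 0 ≤ t → ∫ τ in (0:ℝ)..t, c τ =
      max (t - t11) 0 - max (t - t12) 0 - max (t - t21) 0 + max (t - t22) 0 := by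
    intro t ht
    have i1 := heavi_intble t11 t
    have i2 := heavi_intble t12 t
    have i3 := heavi_intble t21 t
    have i4 := heavi_intble t22 t
    have hstep : ∫ τ in (0:ℝ)..t, c τ =
        (∫ τ in (0:ℝ)..t, heaviside (τ - t11)) - (∫ τ in (0:ℝ)..t, heaviside (τ - t12))
        - (∫ τ in (0:ℝ)..t, heaviside (τ - t21)) + (∫ τ in (0:ℝ)..t, heaviside (τ - t22)) := by
      simp_rw [hc]
      rw [intervalIntegral.integral_add ((i1.sub i2).sub i3) i4,
        intervalIntegral.integral_sub (i1.sub i2) i3,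
        intervalIntegral.integral_sub i1 i2]
    rw [hstep, heavi_integral t11 t h0 ht, heavi_integral t12 t h12 ht,
      heavi_integral t21 t h21 ht, heavi_integral t22 t h22 ht]
  constructor
  · intro h
    have := h t22 h22
    rw [hC t22 h22] at this
    rw [max_eq_left (by linarith : (0:ℝ) ≤ t22 - t11),
      max_eq_left (by linarith : (0:ℝ) ≤ t22 - t12),
      max_eq_left (by linarith : (0:ℝ) ≤ t22 - t21)] at this
    simp at this
    linarith
  · intro hK t ht
    rw [hC t ht]
    rw [max_def, max_def, max_def, max_def]
    split_ifs <;> linarith
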